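/- There exists a countable subset C of (0,π)⁴ such that for every (ω₁,ω₂,ψ₁,ψ₂) ∈ (0,π)⁴ with (ω₁,ω₂,ψ₁,ψ₂) ∉ C, both (1/(MN)) Σ_{n=1}^{N} Σ_{m=1}^{M} cos(ω₁ m + ω₂ m² + ψ₁ n + ψ₂ n²) → 0 and (1/(MN)) Σ_{n=1}^{N} Σ_{m=1}^{M} sin(ω₁ m + ω₂ m² + ψ₁ n + ψ₂ n²) → 0 as min{M,N} → ∞. -/

import Mathlib

open Filter Real


noncomputable def Efn (a b : ℝ) (m : ℕ) : ℂ :=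
  Complex.exp (((a * m + b * m ^ 2 : ℝ) : ℂ) * Complex.I)

noncomputable def Sfn (a b : ℝ) (M : ℕ) : ℂ := ∑ m ∈ Finset.Icc 1 M, Efn a b m

lemma norm_Efn (a b : ℝ) (m : ℕ) : ‖Efn a b m‖ = 1 := by
  have : ((a * m + b * m ^ 2 : ℝ) : ℂ) * Complex.I = ((a * m + b * m ^ 2 : ℝ) : ℂ) * Complex.I := rfl
  rw [Efn, Complex.norm_exp_ofReal_mul_I]

lemma norm_geom_le (z : ℂ) (hz : ‖z‖ ≤ 1) (hz1 : z ≠ 1) (n : ℕ) :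
    ‖∑ i ∈ Finset.range n, z ^ i‖ ≤ 2 / ‖1 - z‖ := by
  rw [geom_sum_eq hz1, norm_div]
  have h1 : ‖z ^ n - 1‖ ≤ 2 := by
    calc ‖z ^ n - 1‖ ≤ ‖z ^ n‖ + ‖(1:ℂ)‖ := norm_sub_le _ _
    _ ≤ 1 + 1 := by
        rw [norm_pow, norm_one]
        exact add_le_add (pow_le_one₀ (norm_nonneg z) hz) le_rfl
    _ = 2 := by norm_num
  rw [norm_sub_rev z 1]
  have h2 : 0 < ‖1 - z‖ := by
    rw [norm_pos_iff, sub_ne_zero]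
    exact fun h => hz1 h.symm
  gcongr

lemma norm_expsum_le (α β : ℝ) (h : Complex.exp ((α:ℂ) * Complex.I) ≠ 1) (K : ℕ) :
    ‖∑ u ∈ Finset.Icc 1 K, Complex.exp (((α * u + β : ℝ) : ℂ) * Complex.I)‖
      ≤ 2 / ‖1 - Complex.exp ((α:ℂ) * Complex.I)‖ := by
  set z := Complex.exp ((α:ℂ) * Complex.I) with hz
  have hznorm : ‖z‖ = 1 := Complex.norm_exp_ofReal_mul_I α
  have hterm : ∀ u : ℕ, Complex.exp (((α * u + β : ℝ) : ℂ) * Complex.I)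
      = Complex.exp ((β:ℂ) * Complex.I) * z ^ u := by
    intro u
    rw [hz, ← Complex.exp_nat_mul, ← Complex.exp_add]
    congr 1
    push_cast
    ring
  calc ‖∑ u ∈ Finset.Icc 1 K, Complex.exp (((α * u + β : ℝ) : ℂ) * Complex.I)‖
      = ‖Complex.exp ((β:ℂ) * Complex.I) * ∑ u ∈ Finset.Icc 1 K, z ^ u‖ := by
        rw [Finset.mul_sum]; exact congrArg _ (Finset.sum_congr rfl fun u _ => hterm u)
    _ = ‖∑ u ∈ Finset.Icc 1 K, z ^ u‖ := by
        rw [norm_mul, Complex.norm_exp_ofReal_mul_I, one_mul]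
    _ = ‖z * ∑ i ∈ Finset.range K, z ^ i‖ := by
        congr 1
        rw [← Finset.Ico_add_one_right_eq_Icc, Finset.sum_Ico_eq_sum_range]
        simp only [Nat.succ_sub_one, Nat.add_sub_cancel]
        rw [Finset.mul_sum]
        exact Finset.sum_congr rfl fun i _ => by rw [pow_add, pow_one]
    _ ≤ 2 / ‖1 - z‖ := by
        rw [norm_mul, hznorm, one_mul]
        exact norm_geom_le z hznorm.le h K

lemma shift_sum (G : ℕ → ℂ) (M H' h : ℕ) (hh : h ≤ H') (hG0 : G 0 = 0)
    (hGM : ∀ v, M < v → G v = 0) :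
    ∑ m ∈ Finset.range (M + H'), G (m + 1 - h) = ∑ v ∈ Finset.Icc 1 M, G v := by
  have step1 : ∑ m ∈ Finset.range (M + H'), G (m + 1 - h)
      = ∑ m ∈ Finset.Ico h (h + M), G (m + 1 - h) := by
    refine (Finset.sum_subset ?_ ?_).symm
    · intro m hm
      simp only [Finset.mem_Ico] at hm
      simp only [Finset.mem_range]
      omega
    · intro m _ hm
      simp only [Finset.mem_Ico, not_and, not_lt] at hm
      rcases lt_or_ge m h with hc | hc
      · have : m + 1 - h = 0 := by omega
        rw [this, hG0]
      · exact hGM _ (by omega)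
  rw [step1, Finset.sum_Ico_eq_sum_range]
  have : h + M - h = M := by omega
  rw [this]
  have step2 : ∀ i, G (h + i + 1 - h) = G (i + 1) := by
    intro i; congr 1; omega
  rw [Finset.sum_congr rfl fun i _ => step2 i]
  rw [← Finset.Ico_add_one_right_eq_Icc, Finset.sum_Ico_eq_sum_range]
  simp only [Nat.succ_sub_one, Nat.add_sub_cancel]
  exact Finset.sum_congr rfl fun i _ => by rw [Nat.add_comm]

lemma tendsto_of_quasiperiodic (f : ℕ → ℂ) (hf : ∀ m, ‖f m‖ ≤ 1) (P : ℕ) (hP : 1 ≤ P)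
    (c : ℂ) (hc : c ≠ 1) (hc1 : ‖c‖ ≤ 1) (hper : ∀ m, f (m + P) = c * f m) :
    Tendsto (fun M : ℕ => ‖∑ m ∈ Finset.Icc 1 M, f m‖ / M) atTop (nhds 0) := by
  set g : ℕ → ℂ := fun M => ∑ m ∈ Finset.range M, f (m + 1) with hg
  have hgIcc : ∀ M, ∑ m ∈ Finset.Icc 1 M, f m = g M := by
    intro M
    rw [← Finset.Ico_add_one_right_eq_Icc, Finset.sum_Ico_eq_sum_range]
    simp only [Nat.succ_sub_one, Nat.add_sub_cancel]
    exact Finset.sum_congr rfl fun i _ => by rw [Nat.add_comm]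
  have hrec : ∀ M, g (P + M) = g P + c * g M := by
    intro M
    simp only [hg]
    rw [Finset.sum_range_add, Finset.mul_sum]
    congr 1
    refine Finset.sum_congr rfl fun i _ => ?_
    have : P + i + 1 = (i + 1) + P := by omega
    rw [this, hper]
  have hclosed : ∀ k r, g (k * P + r)
      = c ^ k * g r + (∑ j ∈ Finset.range k, c ^ j) * g P := by
    intro k
    induction k with
    | zero => intro r; simp
    | succ k ih =>
      intro r
      have h1 : (k + 1) * P + r = P + (k * P + r) := by ring
      rw [h1, hrec, ih r, geom_sum_succ]
      ring
  have hgb : ∀ M, ‖g M‖ ≤ (M : ℝ) := by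
    intro M
    calc ‖g M‖ ≤ ∑ m ∈ Finset.range M, ‖f (m + 1)‖ := norm_sum_le _ _
    _ ≤ ∑ _m ∈ Finset.range M, 1 := Finset.sum_le_sum fun i _ => hf _
    _ = M := by simp
  have hB : ∀ M, ‖g M‖ ≤ (P : ℝ) + 2 / ‖1 - c‖ * P := by
    intro M
    have hM : M = (M / P) * P + M % P := by rw [mul_comm]; exact (Nat.div_add_mod M P).symm
    calc ‖g M‖ = ‖c ^ (M / P) * g (M % P) + (∑ j ∈ Finset.range (M / P), c ^ j) * g P‖ := by
          rw [← hclosed]; exact congrArg _ (congrArg g hM)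
    _ ≤ ‖c ^ (M / P)‖ * ‖g (M % P)‖ + ‖∑ j ∈ Finset.range (M / P), c ^ j‖ * ‖g P‖ := by
          refine (norm_add_le _ _).trans ?_
          rw [norm_mul, norm_mul]
    _ ≤ 1 * (P : ℝ) + (2 / ‖1 - c‖) * P := by
          gcongr
          · rw [norm_pow]; exact pow_le_one₀ (norm_nonneg c) hc1
          · exact (hgb _).trans (by exact_mod_cast Nat.le_of_lt (Nat.mod_lt M hP))
          · exact norm_geom_le c hc1 hc _
          · exact hgb P
    _ = (P : ℝ) + 2 / ‖1 - c‖ * P := by ring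
  have hfinal : ∀ M : ℕ, ‖∑ m ∈ Finset.Icc 1 M, f m‖ / M ≤ ((P : ℝ) + 2 / ‖1 - c‖ * P) / M := by
    intro M
    rw [hgIcc]
    gcongr
    exact hB M
  refine squeeze_zero (fun M => by positivity) hfinal ?_
  exact tendsto_const_div_atTop_nhds_zero_nat _
noncomputable def Kc (b : ℝ) (H' : ℕ) : ℝ :=
  ∑ d ∈ Finset.Icc 1 H', 2 / ‖1 - Complex.exp (((-(2 * b * d) : ℝ) : ℂ) * Complex.I)‖

lemma Kc_nonneg (b : ℝ) (H' : ℕ) : 0 ≤ Kc b H' := by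
  refine Finset.sum_nonneg fun d _ => by positivity

lemma Efn_mul_conj (a b : ℝ) (v d : ℕ) :
    Efn a b v * (starRingEnd ℂ) (Efn a b (v + d))
      = Complex.exp ((((-(2 * b * d)) * v + (-(a * d + b * d ^ 2)) : ℝ) : ℂ) * Complex.I) := by
  rw [Efn, Efn, ← Complex.exp_conj, ← Complex.exp_add]
  congr 1
  rw [map_mul, Complex.conj_ofReal, Complex.conj_I]
  push_cast
  ring

lemma vdc_ineq (a b : ℝ)
    (hb : ∀ d : ℕ, 1 ≤ d → Complex.exp (((2 * b * d : ℝ) : ℂ) * Complex.I) ≠ 1)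
    (H' M : ℕ) :
    (((H' : ℝ) + 1)) ^ 2 * ‖Sfn a b M‖ ^ 2
      ≤ ((M : ℝ) + H') * (((H' : ℝ) + 1) * M + ((H' : ℝ) + 1) ^ 2 * Kc b H') := by
  classical
  set H : ℕ := H' + 1 with hH
  set bb : ℕ → ℂ := fun v => if v ∈ Finset.Icc 1 M then Efn a b v else 0 with hbbdef
  have hbb0 : bb 0 = 0 := by simp [hbbdef]
  have hbbM : ∀ v, M < v → bb v = 0 := by
    intro v hv; simp only [hbbdef, Finset.mem_Icc, if_neg (by omega : ¬(1 ≤ v ∧ v ≤ M))]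
  have hbbn : ∀ v, ‖bb v‖ ≤ 1 := by
    intro v
    by_cases h : v ∈ Finset.Icc 1 M
    · simp only [hbbdef, if_pos h, norm_Efn]; exact le_rfl
    · rw [hbbdef]; simp only [if_neg h, norm_zero]; norm_num
  have hbbS : ∑ v ∈ Finset.Icc 1 M, bb v = Sfn a b M := by
    exact Finset.sum_congr rfl fun v hv => by rw [hbbdef]; exact if_pos hv
  set T : ℕ → ℂ := fun m => ∑ h ∈ Finset.range H, bb (m + 1 - h) with hT
  -- the basic identity
  have hid : ∑ m ∈ Finset.range (M + H'), T m = (H : ℂ) * Sfn a b M := by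
    rw [hT, Finset.sum_comm]
    have : ∀ h ∈ Finset.range H, ∑ m ∈ Finset.range (M + H'), bb (m + 1 - h)
        = Sfn a b M := by
      intro h hh
      rw [shift_sum bb M H' h (by simp only [Finset.mem_range] at hh; omega) hbb0 hbbM]
      exact hbbS
    rw [Finset.sum_congr rfl this, Finset.sum_const, Finset.card_range]
    simp
  -- Cauchy-Schwarz
  have hCS : ((H : ℝ)) ^ 2 * ‖Sfn a b M‖ ^ 2
      ≤ ((M : ℝ) + H') * ∑ m ∈ Finset.range (M + H'), ‖T m‖ ^ 2 := by
    have h1 : (H : ℝ) * ‖Sfn a b M‖ ≤ ∑ m ∈ Finset.range (M + H'), ‖T m‖ := by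
      calc (H : ℝ) * ‖Sfn a b M‖ = ‖(H : ℂ) * Sfn a b M‖ := by
            rw [norm_mul]; norm_num
      _ = ‖∑ m ∈ Finset.range (M + H'), T m‖ := by rw [hid]
      _ ≤ ∑ m ∈ Finset.range (M + H'), ‖T m‖ := norm_sum_le _ _
    have h2 : (∑ m ∈ Finset.range (M + H'), ‖T m‖) ^ 2
        ≤ ((M : ℝ) + H') * ∑ m ∈ Finset.range (M + H'), ‖T m‖ ^ 2 := by
      have := sq_sum_le_card_mul_sum_sq (s := Finset.range (M + H'))
        (f := fun m => ‖T m‖)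
      simpa [Finset.card_range] using this
    calc ((H : ℝ)) ^ 2 * ‖Sfn a b M‖ ^ 2 = ((H : ℝ) * ‖Sfn a b M‖) ^ 2 := by ring
    _ ≤ (∑ m ∈ Finset.range (M + H'), ‖T m‖) ^ 2 := by
        apply pow_le_pow_left₀ (by positivity) h1
    _ ≤ _ := h2
  set W : ℕ → ℕ → ℂ := fun h h' => ∑ m ∈ Finset.range (M + H'),
      bb (m + 1 - h) * (starRingEnd ℂ) (bb (m + 1 - h')) with hW
  have hnorm_sq : ∀ z : ℂ, ‖z‖ ^ 2 = (z * (starRingEnd ℂ) z).re := by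
    intro z
    rw [Complex.mul_conj, Complex.ofReal_re, Complex.normSq_eq_norm_sq]
  have hexpand : ∑ m ∈ Finset.range (M + H'), ‖T m‖ ^ 2
      = (∑ h ∈ Finset.range H, ∑ h' ∈ Finset.range H, W h h').re := by
    have e1 : ∀ m, T m * (starRingEnd ℂ) (T m)
        = ∑ h ∈ Finset.range H, ∑ h' ∈ Finset.range H,
            bb (m + 1 - h) * (starRingEnd ℂ) (bb (m + 1 - h')) := by
      intro m
      rw [hT, map_sum, Finset.sum_mul_sum]
    calc ∑ m ∈ Finset.range (M + H'), ‖T m‖ ^ 2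
        = ∑ m ∈ Finset.range (M + H'), (T m * (starRingEnd ℂ) (T m)).re :=
          Finset.sum_congr rfl fun m _ => hnorm_sq (T m)
      _ = (∑ m ∈ Finset.range (M + H'), T m * (starRingEnd ℂ) (T m)).re := by
          rw [Complex.re_sum]
      _ = (∑ h ∈ Finset.range H, ∑ h' ∈ Finset.range H, W h h').re := by
          congr 1
          rw [Finset.sum_congr rfl fun m _ => e1 m, Finset.sum_comm]
          exact Finset.sum_congr rfl fun h _ => Finset.sum_comm
  have hdiag : ∀ h, h ≤ H' → ‖W h h‖ ≤ (M : ℝ) := by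
    intro h hh
    have heq : W h h = ∑ v ∈ Finset.Icc 1 M, bb v * (starRingEnd ℂ) (bb v) := by
      rw [hW]
      exact shift_sum (fun u => bb u * (starRingEnd ℂ) (bb u)) M H' h hh
        (by show bb 0 * (starRingEnd ℂ) (bb 0) = 0; rw [hbb0]; simp)
        (fun v hv => by
          show bb v * (starRingEnd ℂ) (bb v) = 0
          rw [hbbM v hv]; simp)
    rw [heq]
    calc ‖∑ v ∈ Finset.Icc 1 M, bb v * (starRingEnd ℂ) (bb v)‖
        ≤ ∑ v ∈ Finset.Icc 1 M, ‖bb v * (starRingEnd ℂ) (bb v)‖ := norm_sum_le _ _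
      _ ≤ ∑ _v ∈ Finset.Icc 1 M, 1 := by
          refine Finset.sum_le_sum fun v _ => ?_
          rw [norm_mul, RCLike.norm_conj]
          exact mul_le_one₀ (hbbn v) (norm_nonneg _) (hbbn v)
      _ = M := by simp [Nat.card_Icc]
  have hoff : ∀ h h', h' < h → h ≤ H' → ‖W h h'‖ ≤ Kc b H' := by
    intro h h' hlt hle
    set d : ℕ := h - h' with hd
    have hd1 : 1 ≤ d := by omega
    have hdH : d ≤ H' := by omega
    set G : ℕ → ℂ := fun u => bb u * (starRingEnd ℂ) (bb (u + d)) with hG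
    have hterm : ∀ m, bb (m + 1 - h) * (starRingEnd ℂ) (bb (m + 1 - h')) = G (m + 1 - h) := by
      intro m
      rcases le_or_gt h (m + 1) with hc | hc
      · have e : m + 1 - h' = (m + 1 - h) + d := by omega
        rw [e, hG]
      · have h0 : m + 1 - h = 0 := by omega
        rw [h0, hG]
        simp [hbb0]
    have hWeq : W h h' = ∑ v ∈ Finset.Icc 1 M, G v := by
      show (∑ m ∈ Finset.range (M + H'), bb (m + 1 - h) * (starRingEnd ℂ) (bb (m + 1 - h')))
        = ∑ v ∈ Finset.Icc 1 M, G v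
      rw [Finset.sum_congr rfl fun m _ => hterm m]
      exact shift_sum G M H' h hle
        (by show bb 0 * (starRingEnd ℂ) (bb (0 + d)) = 0; rw [hbb0]; simp)
        (fun v hv => by
          show bb v * (starRingEnd ℂ) (bb (v + d)) = 0
          rw [hbbM v hv]; simp)
    have hWeq2 : W h h' = ∑ v ∈ Finset.Icc 1 (M - d),
        Complex.exp ((((-(2 * b * d)) * v + (-(a * d + b * d ^ 2)) : ℝ) : ℂ) * Complex.I) := by
      have hsub : Finset.Icc 1 (M - d) ⊆ Finset.Icc 1 M :=
        Finset.Icc_subset_Icc_right (Nat.sub_le M d)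
      have hz : ∀ v ∈ Finset.Icc 1 M, v ∉ Finset.Icc 1 (M - d) → G v = 0 := by
        intro v hv hvn
        simp only [Finset.mem_Icc] at hv
        simp only [Finset.mem_Icc, not_and, not_le] at hvn
        have h2 := hvn hv.1
        have h3 : M < v + d := by omega
        show bb v * (starRingEnd ℂ) (bb (v + d)) = 0
        rw [hbbM _ h3]
        simp
      rw [hWeq, ← Finset.sum_subset hsub hz]
      refine Finset.sum_congr rfl fun v hv => ?_
      simp only [Finset.mem_Icc] at hv
      have hb1 : bb v = Efn a b v := if_pos (Finset.mem_Icc.2 ⟨hv.1, by omega⟩)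
      have hb2 : bb (v + d) = Efn a b (v + d) := if_pos (Finset.mem_Icc.2 ⟨by omega, by omega⟩)
      show bb v * (starRingEnd ℂ) (bb (v + d)) = _
      rw [hb1, hb2, Efn_mul_conj]
    have halpha : Complex.exp (((-(2 * b * d) : ℝ) : ℂ) * Complex.I) ≠ 1 := by
      intro heq
      apply hb d hd1
      have hmul : Complex.exp (((2 * b * d : ℝ) : ℂ) * Complex.I)
          * Complex.exp (((-(2 * b * d) : ℝ) : ℂ) * Complex.I) = 1 := by
        rw [← Complex.exp_add,
          show (((2 * b * d : ℝ) : ℂ) * Complex.I + ((-(2 * b * d) : ℝ) : ℂ) * Complex.I) = 0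
            by push_cast; ring]
        exact Complex.exp_zero
      rw [heq, mul_one] at hmul
      exact hmul
    have hle2 : ‖W h h'‖ ≤ 2 / ‖1 - Complex.exp (((-(2 * b * d) : ℝ) : ℂ) * Complex.I)‖ := by
      rw [hWeq2]
      exact norm_expsum_le _ _ halpha _
    refine hle2.trans ?_
    unfold Kc
    exact Finset.single_le_sum
      (f := fun e : ℕ => 2 / ‖1 - Complex.exp (((-(2 * b * e) : ℝ) : ℂ) * Complex.I)‖)
      (fun i _ => by positivity) (Finset.mem_Icc.2 ⟨hd1, hdH⟩)
  have hsymm : ∀ h h', W h' h = (starRingEnd ℂ) (W h h') := by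
    intro h h'
    show (∑ m ∈ Finset.range (M + H'), bb (m + 1 - h') * (starRingEnd ℂ) (bb (m + 1 - h)))
      = (starRingEnd ℂ) (∑ m ∈ Finset.range (M + H'), bb (m + 1 - h) * (starRingEnd ℂ) (bb (m + 1 - h')))
    rw [map_sum]
    refine Finset.sum_congr rfl fun m _ => ?_
    simp only [map_mul, Complex.conj_conj]
    ring
  have hWsum : (∑ h ∈ Finset.range H, ∑ h' ∈ Finset.range H, W h h').re
      ≤ (H : ℝ) * M + (H : ℝ) ^ 2 * Kc b H' := by
    calc (∑ h ∈ Finset.range H, ∑ h' ∈ Finset.range H, W h h').re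
        ≤ ‖∑ h ∈ Finset.range H, ∑ h' ∈ Finset.range H, W h h'‖ := Complex.re_le_norm _
      _ ≤ ∑ h ∈ Finset.range H, ‖∑ h' ∈ Finset.range H, W h h'‖ := norm_sum_le _ _
      _ ≤ ∑ h ∈ Finset.range H, ∑ h' ∈ Finset.range H, ‖W h h'‖ :=
          Finset.sum_le_sum fun h _ => norm_sum_le _ _
      _ ≤ ∑ h ∈ Finset.range H, ∑ h' ∈ Finset.range H,
            ((if h = h' then (M : ℝ) else 0) + Kc b H') := by
          refine Finset.sum_le_sum fun h hh => Finset.sum_le_sum fun h' hh' => ?_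
          simp only [Finset.mem_range] at hh hh'
          rcases eq_or_ne h h' with heq | hne
          · subst heq
            rw [if_pos rfl]
            exact (hdiag h (by omega)).trans (le_add_of_nonneg_right (Kc_nonneg b H'))
          · rw [if_neg hne, zero_add]
            rcases lt_or_gt_of_ne hne with hlt | hgt
            · have e : ‖W h' h‖ = ‖W h h'‖ := by rw [hsymm h h', RCLike.norm_conj]
              rw [← e]
              exact hoff h' h hlt (by omega)
            · exact hoff h h' hgt (by omega)
      _ = (H : ℝ) * M + (H : ℝ) ^ 2 * Kc b H' := by
          simp only [Finset.sum_add_distrib, Finset.sum_ite_eq, Finset.mem_range,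
            Finset.sum_const, Finset.card_range, nsmul_eq_mul]
          have hHlt : ∀ h ∈ Finset.range H, (if h < H then (M : ℝ) else 0) = (M : ℝ) := by
            intro h hh
            simp only [Finset.mem_range] at hh
            rw [if_pos hh]
          rw [Finset.sum_congr rfl hHlt, Finset.sum_const, Finset.card_range, nsmul_eq_mul]
          ring
  calc ((H' : ℝ) + 1) ^ 2 * ‖Sfn a b M‖ ^ 2 = (H : ℝ) ^ 2 * ‖Sfn a b M‖ ^ 2 := by
        rw [hH]; push_cast; ring
    _ ≤ ((M : ℝ) + H') * ∑ m ∈ Finset.range (M + H'), ‖T m‖ ^ 2 := hCS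
    _ ≤ ((M : ℝ) + H') * ((H : ℝ) * M + (H : ℝ) ^ 2 * Kc b H') := by
        refine mul_le_mul_of_nonneg_left ?_ (by positivity)
        rw [hexpand]; exact hWsum
    _ = ((M : ℝ) + H') * (((H' : ℝ) + 1) * M + ((H' : ℝ) + 1) ^ 2 * Kc b H') := by
        rw [hH]; push_cast; ring

lemma vdc (a b : ℝ)
    (hb : ∀ d : ℕ, 1 ≤ d → Complex.exp (((2 * b * d : ℝ) : ℂ) * Complex.I) ≠ 1) :
    Tendsto (fun M : ℕ => ‖Sfn a b M‖ / M) atTop (nhds 0) := by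
  rw [Metric.tendsto_atTop]
  intro ε hε
  -- choose H'
  set H' : ℕ := ⌈(4 : ℝ) / ε ^ 2⌉₊ with hH'
  have hHpos : (0 : ℝ) < (H' : ℝ) + 1 := by positivity
  have hHbig : (4 : ℝ) / ((H' : ℝ) + 1) < ε ^ 2 := by
    rw [div_lt_iff₀ hHpos]
    have h1 : (4 : ℝ) / ε ^ 2 ≤ (H' : ℝ) := Nat.le_ceil _
    have h2 : (4 : ℝ) / ε ^ 2 < (H' : ℝ) + 1 := lt_of_le_of_lt h1 (by linarith)
    calc (4 : ℝ) = (4 / ε ^ 2) * ε ^ 2 := by field_simp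
    _ < ((H' : ℝ) + 1) * ε ^ 2 := by
        apply mul_lt_mul_of_pos_right h2 (by positivity)
    _ = ε ^ 2 * ((H' : ℝ) + 1) := by ring
  set K : ℝ := Kc b H' with hK
  have hK0 : 0 ≤ K := Kc_nonneg b H'
  set M₀ : ℕ := max (max 1 H') ⌈((H' : ℝ) + 1) * K⌉₊ with hM₀
  refine ⟨M₀, fun M hM => ?_⟩
  have hM1 : 1 ≤ M := le_trans (le_trans (le_max_left 1 H') (le_max_left _ _)) hM
  have hMr : (1 : ℝ) ≤ M := by exact_mod_cast hM1
  have hMpos : (0 : ℝ) < M := by linarith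
  have hMH : (H' : ℝ) ≤ M := by
    exact_mod_cast le_trans (le_trans (le_max_right 1 H') (le_max_left _ _)) hM
  have hMK : ((H' : ℝ) + 1) * K ≤ M := by
    have : (⌈((H' : ℝ) + 1) * K⌉₊ : ℕ) ≤ M := le_trans (le_max_right _ _) hM
    calc ((H' : ℝ) + 1) * K ≤ (⌈((H' : ℝ) + 1) * K⌉₊ : ℝ) := Nat.le_ceil _
    _ ≤ M := by exact_mod_cast this
  have key := vdc_ineq a b hb H' M
  rw [← hK] at key
  set x : ℝ := ‖Sfn a b M‖ with hx
  have hx0 : 0 ≤ x := norm_nonneg _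
  -- derive x^2 * (H'+1) ≤ 4 * M^2
  have step1 : x ^ 2 * ((H' : ℝ) + 1) ≤ 4 * M ^ 2 := by
    have e1 : (M : ℝ) + H' ≤ 2 * M := by linarith
    have e2 : ((H' : ℝ) + 1) * M + ((H' : ℝ) + 1) ^ 2 * K ≤ 2 * (((H' : ℝ) + 1) * M) := by
      have := mul_le_mul_of_nonneg_left hMK (le_of_lt hHpos)
      nlinarith [this]
    have e3 : ((M : ℝ) + H') * (((H' : ℝ) + 1) * M + ((H' : ℝ) + 1) ^ 2 * K)
        ≤ (2 * M) * (2 * (((H' : ℝ) + 1) * M)) := by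
      apply mul_le_mul e1 e2 (by positivity) (by positivity)
    have e4 : (x ^ 2 * ((H' : ℝ) + 1)) * ((H' : ℝ) + 1) ≤ (4 * M ^ 2) * ((H' : ℝ) + 1) := by
      nlinarith [key, e3]
    exact le_of_mul_le_mul_right e4 hHpos
  have step2 : (x / M) ^ 2 < ε ^ 2 := by
    rw [div_pow, div_lt_iff₀ (by positivity)]
    have h4 : 4 < ε ^ 2 * ((H' : ℝ) + 1) := by
      rw [div_lt_iff₀ hHpos] at hHbig
      exact hHbig
    have f1 : 4 * (M : ℝ) ^ 2 < ε ^ 2 * ((H' : ℝ) + 1) * M ^ 2 := by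
      nlinarith [mul_pos (show (0:ℝ) < ε ^ 2 * ((H' : ℝ) + 1) - 4 by linarith)
        (show (0:ℝ) < (M:ℝ) ^ 2 by positivity)]
    have f2 : x ^ 2 * ((H' : ℝ) + 1) < (ε ^ 2 * M ^ 2) * ((H' : ℝ) + 1) := by nlinarith [step1, f1]
    exact lt_of_mul_lt_mul_right f2 (le_of_lt hHpos)
  have step3 : x / M < ε := by
    have := lt_of_pow_lt_pow_left₀ 2 hε.le step2
    exact this
  rw [Real.dist_eq, sub_zero, abs_of_nonneg (by positivity)]
  exact step3

lemma key1 (a b : ℝ) (h : ¬((∃ q : ℚ, a = q * π) ∧ (∃ q : ℚ, b = q * π))) :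
    Tendsto (fun M : ℕ => ‖Sfn a b M‖ / M) atTop (nhds 0) := by
  by_cases hbQ : ∃ q : ℚ, b = q * π
  · -- b rational multiple of π; then a is not
    obtain ⟨q, hq⟩ := hbQ
    have haQ : ¬∃ r : ℚ, a = r * π := fun hA => h ⟨hA, ⟨q, hq⟩⟩
    set P : ℕ := 2 * q.den with hP
    have hden : 0 < q.den := q.pos
    have hP1 : 1 ≤ P := by omega
    set c : ℂ := Complex.exp (((a * P : ℝ) : ℂ) * Complex.I) with hc
    have hc1 : ‖c‖ ≤ 1 := le_of_eq (Complex.norm_exp_ofReal_mul_I _)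
    have hcne : c ≠ 1 := by
      intro heq
      rw [hc, Complex.exp_eq_one_iff] at heq
      obtain ⟨n, hn⟩ := heq
      have him := congrArg Complex.im hn
      simp [Complex.mul_im] at him
      apply haQ
      refine ⟨(2 * n : ℚ) / (P : ℚ), ?_⟩
      have hPne : ((P : ℕ) : ℝ) ≠ 0 := by positivity
      push_cast
      field_simp
      linarith [him]
    have hqden : (q : ℝ) * (q.den : ℝ) = (q.num : ℝ) := by
      rw [Rat.cast_def]
      field_simp
    have hper : ∀ m : ℕ, Efn a b (m + P) = c * Efn a b m := by
      intro m
      rw [Efn, Efn, hc, ← Complex.exp_add, Complex.exp_eq_exp_iff_exists_int]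
      refine ⟨2 * q.num * (m + q.den), ?_⟩
      have hqdenC : ((q : ℝ) : ℂ) * ((q.den : ℕ) : ℂ) = ((q.num : ℤ) : ℂ) := by
        exact_mod_cast congrArg (fun x : ℝ => (x : ℂ)) hqden
      rw [hq, hP]
      push_cast
      linear_combination (4 * (π : ℂ) * ((m : ℂ) + (q.den : ℂ)) * Complex.I) * hqdenC
    exact tendsto_of_quasiperiodic (Efn a b) (fun m => le_of_eq (norm_Efn a b m)) P hP1 c
      hcne hc1 hper
  · -- b not a rational multiple of π : van der Corput applies
    apply vdc
    intro d hd heq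
    rw [Complex.exp_eq_one_iff] at heq
    obtain ⟨n, hn⟩ := heq
    have him := congrArg Complex.im hn
    simp [Complex.mul_im] at him
    apply hbQ
    refine ⟨(n : ℚ) / (d : ℚ), ?_⟩
    have hdne : ((d : ℕ) : ℝ) ≠ 0 := by
      have : 0 < d := hd
      positivity
    push_cast
    field_simp
    linarith [him]

lemma Sfn_norm_le (u v : ℝ) (M : ℕ) : ‖Sfn u v M‖ ≤ (M : ℝ) := by
  calc ‖Sfn u v M‖ ≤ ∑ m ∈ Finset.Icc 1 M, ‖Efn u v m‖ := norm_sum_le _ _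
  _ = ∑ _m ∈ Finset.Icc 1 M, (1 : ℝ) := Finset.sum_congr rfl fun m _ => norm_Efn u v m
  _ = M := by simp [Nat.card_Icc]

lemma hfact (ω₁ ω₂ ψ₁ ψ₂ : ℝ) (M N : ℕ) :
    (∑ n ∈ Finset.Icc 1 N, ∑ m ∈ Finset.Icc 1 M,
      Complex.exp (((ω₁ * (m : ℝ) + ω₂ * (m : ℝ) ^ 2 + ψ₁ * (n : ℝ) + ψ₂ * (n : ℝ) ^ 2 : ℝ) : ℂ)
        * Complex.I))
      = Sfn ψ₁ ψ₂ N * Sfn ω₁ ω₂ M := by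
  rw [Sfn, Sfn, Finset.sum_mul_sum]
  refine Finset.sum_congr rfl fun n _ => Finset.sum_congr rfl fun m _ => ?_
  rw [Efn, Efn, ← Complex.exp_add]
  congr 1
  push_cast
  ring

lemma habs (ω₁ ω₂ ψ₁ ψ₂ : ℝ) (M N : ℕ) (hM : 1 ≤ M) (hN : 1 ≤ N) (r : ℝ)
    (hr : |r| ≤ ‖Sfn ψ₁ ψ₂ N * Sfn ω₁ ω₂ M‖) :
    |(1 / ((M : ℝ) * N)) * r|
      ≤ min (‖Sfn ω₁ ω₂ M‖ / M) (‖Sfn ψ₁ ψ₂ N‖ / N) := by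
  have hMr : (0 : ℝ) < M := by exact_mod_cast hM
  have hNr : (0 : ℝ) < N := by exact_mod_cast hN
  have h1 : |(1 / ((M : ℝ) * N)) * r| = (1 / ((M : ℝ) * N)) * |r| := by
    rw [abs_mul, abs_of_nonneg (by positivity : (0:ℝ) ≤ 1 / ((M : ℝ) * N))]
  rw [h1, norm_mul] at *
  have c1 : |r| ≤ (N : ℝ) * ‖Sfn ω₁ ω₂ M‖ :=
    hr.trans (mul_le_mul_of_nonneg_right (Sfn_norm_le _ _ _) (norm_nonneg _))
  have c2 : |r| ≤ ‖Sfn ψ₁ ψ₂ N‖ * (M : ℝ) :=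
    hr.trans (mul_le_mul_of_nonneg_left (Sfn_norm_le _ _ _) (norm_nonneg _))
  have e1 : (1 / ((M : ℝ) * N)) * ((N : ℝ) * ‖Sfn ω₁ ω₂ M‖) = ‖Sfn ω₁ ω₂ M‖ / M := by
    field_simp
  have e2 : (1 / ((M : ℝ) * N)) * (‖Sfn ψ₁ ψ₂ N‖ * (M : ℝ)) = ‖Sfn ψ₁ ψ₂ N‖ / N := by
    field_simp
  refine le_min ?_ ?_
  · rw [← e1]
    exact mul_le_mul_of_nonneg_left c1 (by positivity)
  · rw [← e2]
    exact mul_le_mul_of_nonneg_left c2 (by positivity)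

lemma tendsto_min_zero (ω₁ ω₂ ψ₁ ψ₂ : ℝ)
    (hgood : Tendsto (fun M : ℕ => ‖Sfn ω₁ ω₂ M‖ / M) atTop (nhds 0)
      ∨ Tendsto (fun N : ℕ => ‖Sfn ψ₁ ψ₂ N‖ / N) atTop (nhds 0)) :
    Tendsto (fun MN : ℕ × ℕ =>
      min (‖Sfn ω₁ ω₂ MN.1‖ / MN.1) (‖Sfn ψ₁ ψ₂ MN.2‖ / MN.2)) atTop (nhds 0) := by
  have hfst : Tendsto (fun MN : ℕ × ℕ => MN.1) atTop atTop := by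
    rw [← Filter.prod_atTop_atTop_eq]
    exact tendsto_fst
  have hsnd : Tendsto (fun MN : ℕ × ℕ => MN.2) atTop atTop := by
    rw [← Filter.prod_atTop_atTop_eq]
    exact tendsto_snd
  rcases hgood with hg | hg
  · refine squeeze_zero (fun MN => le_min (by positivity) (by positivity)) 
      (fun MN => min_le_left _ _) (hg.comp hfst)
  · refine squeeze_zero (fun MN => le_min (by positivity) (by positivity))
      (fun MN => min_le_right _ _) (hg.comp hsnd)

/-- There exists a countable subset `C` of `(0,π)⁴` such that for every
`(ω₁,ω₂,ψ₁,ψ₂) ∈ (0,π)⁴` outside `C`, both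
`(1/(MN)) Σ_{n=1}^{N} Σ_{m=1}^{M} cos(ω₁ m + ω₂ m² + ψ₁ n + ψ₂ n²) → 0` and
`(1/(MN)) Σ_{n=1}^{N} Σ_{m=1}^{M} sin(ω₁ m + ω₂ m² + ψ₁ n + ψ₂ n²) → 0`
as `min{M,N} → ∞`. -/
theorem stmt2 :
    ∃ C : Set (ℝ × ℝ × ℝ × ℝ), C.Countable ∧
      ∀ ω₁ ω₂ ψ₁ ψ₂ : ℝ, ω₁ ∈ Set.Ioo 0 π → ω₂ ∈ Set.Ioo 0 π →
        ψ₁ ∈ Set.Ioo 0 π → ψ₂ ∈ Set.Ioo 0 π → (ω₁, ω₂, ψ₁, ψ₂) ∉ C →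
        Tendsto (fun MN : ℕ × ℕ =>
            (1 / ((MN.1 : ℝ) * MN.2)) *
              ∑ n ∈ Finset.Icc 1 MN.2, ∑ m ∈ Finset.Icc 1 MN.1,
                Real.cos (ω₁ * (m : ℝ) + ω₂ * (m : ℝ) ^ 2 + ψ₁ * (n : ℝ) + ψ₂ * (n : ℝ) ^ 2))
          atTop (nhds 0) ∧
        Tendsto (fun MN : ℕ × ℕ =>
            (1 / ((MN.1 : ℝ) * MN.2)) *
              ∑ n ∈ Finset.Icc 1 MN.2, ∑ m ∈ Finset.Icc 1 MN.1,
                Real.sin (ω₁ * (m : ℝ) + ω₂ * (m : ℝ) ^ 2 + ψ₁ * (n : ℝ) + ψ₂ * (n : ℝ) ^ 2))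
          atTop (nhds 0) := by
  classical
  set Q : Set ℝ := Set.range (fun q : ℚ => (q : ℝ) * π) with hQ
  refine ⟨Q ×ˢ (Q ×ˢ (Q ×ˢ Q)), ?_, ?_⟩
  · exact (Set.countable_range _).prod ((Set.countable_range _).prod
      ((Set.countable_range _).prod (Set.countable_range _)))
  intro ω₁ ω₂ ψ₁ ψ₂ _ _ _ _ hC
  have hQiff : ∀ x : ℝ, x ∈ Q ↔ ∃ q : ℚ, x = q * π := by
    intro x
    simp only [hQ, Set.mem_range]
    exact ⟨fun ⟨q, hq⟩ => ⟨q, hq.symm⟩, fun ⟨q, hq⟩ => ⟨q, hq.symm⟩⟩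
  have hmem : ¬(ω₁ ∈ Q ∧ ω₂ ∈ Q ∧ ψ₁ ∈ Q ∧ ψ₂ ∈ Q) := by
    intro ⟨h1, h2, h3, h4⟩
    exact hC ⟨h1, h2, h3, h4⟩
  have hcase : ¬((∃ q : ℚ, ω₁ = q * π) ∧ (∃ q : ℚ, ω₂ = q * π))
      ∨ ¬((∃ q : ℚ, ψ₁ = q * π) ∧ (∃ q : ℚ, ψ₂ = q * π)) := by
    by_contra hcon
    push_neg at hcon
    obtain ⟨hA, hB⟩ := hcon
    exact hmem ⟨(hQiff ω₁).2 hA.1, (hQiff ω₂).2 hA.2, (hQiff ψ₁).2 hB.1, (hQiff ψ₂).2 hB.2⟩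
  have hgood := hcase.imp (key1 ω₁ ω₂) (key1 ψ₁ ψ₂)
  have hmin := tendsto_min_zero ω₁ ω₂ ψ₁ ψ₂ hgood
  have hre : ∀ MN : ℕ × ℕ,
      (∑ n ∈ Finset.Icc 1 MN.2, ∑ m ∈ Finset.Icc 1 MN.1,
        Real.cos (ω₁ * (m : ℝ) + ω₂ * (m : ℝ) ^ 2 + ψ₁ * (n : ℝ) + ψ₂ * (n : ℝ) ^ 2))
      = (Sfn ψ₁ ψ₂ MN.2 * Sfn ω₁ ω₂ MN.1).re := by
    intro MN
    rw [← hfact ω₁ ω₂ ψ₁ ψ₂ MN.1 MN.2, Complex.re_sum]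
    refine Finset.sum_congr rfl fun n _ => ?_
    rw [Complex.re_sum]
    exact Finset.sum_congr rfl fun m _ => (Complex.exp_ofReal_mul_I_re _).symm
  have him : ∀ MN : ℕ × ℕ,
      (∑ n ∈ Finset.Icc 1 MN.2, ∑ m ∈ Finset.Icc 1 MN.1,
        Real.sin (ω₁ * (m : ℝ) + ω₂ * (m : ℝ) ^ 2 + ψ₁ * (n : ℝ) + ψ₂ * (n : ℝ) ^ 2))
      = (Sfn ψ₁ ψ₂ MN.2 * Sfn ω₁ ω₂ MN.1).im := by
    intro MN
    rw [← hfact ω₁ ω₂ ψ₁ ψ₂ MN.1 MN.2, Complex.im_sum]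
    refine Finset.sum_congr rfl fun n _ => ?_
    rw [Complex.im_sum]
    exact Finset.sum_congr rfl fun m _ => (Complex.exp_ofReal_mul_I_im _).symm
  constructor
  · refine squeeze_zero_norm' ?_ hmin
    refine Filter.eventually_atTop.2 ⟨(1, 1), fun MN hMN => ?_⟩
    rw [Real.norm_eq_abs, hre MN]
    refine habs ω₁ ω₂ ψ₁ ψ₂ MN.1 MN.2 hMN.1 hMN.2 _ ?_
    simpa using Complex.abs_re_le_norm (Sfn ψ₁ ψ₂ MN.2 * Sfn ω₁ ω₂ MN.1)
  · refine squeeze_zero_norm' ?_ hmin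
    refine Filter.eventually_atTop.2 ⟨(1, 1), fun MN hMN => ?_⟩
    rw [Real.norm_eq_abs, him MN]
    refine habs ω₁ ω₂ ψ₁ ψ₂ MN.1 MN.2 hMN.1 hMN.2 _ ?_
    simpa using Complex.abs_im_le_norm (Sfn ψ₁ ψ₂ MN.2 * Sfn ω₁ ω₂ MN.1)
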